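/- arXiv:2108.04588 — 4 statements merged into one kernel-verified Lean document; each statement's English description precedes it below -/
import Mathlib

section
/- Let X^n be a sequence of non-empty compact convex subsets of ℝ² converging in Hausdorff distance to a non-empty compact set X*. Let p ∈ ℝ² and r > 0 be such that dist(p, X^n) ≤ r for every n. Then X* ∩ B(p,r) is non-empty and the sequence X^n ∩ B(p,r) converges to X* ∩ B(p,r) in Hausdorff distance, where B(p,r) denotes the closed ball of radius r centered at p. -/
open Metric Filter Set

lemma norm_combo_sq (a b : ℂ) (t : ℝ) :
    ‖(1-t)•a + t•b‖^2 = (1-t)*‖a‖^2 + t*‖b‖^2 - t*(1-t)*‖a-b‖^2 := by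
  have h : ∀ z : ℂ, ‖z‖^2 = z.re^2 + z.im^2 := by
    intro z
    rw [Complex.sq_norm, Complex.normSq_apply]; ring
  simp only [h, Complex.add_re, Complex.add_im, Complex.sub_re, Complex.sub_im,
    Complex.real_smul, Complex.mul_re, Complex.mul_im, Complex.ofReal_re, Complex.ofReal_im]
  ring

lemma seg_lemma {C : Set ℂ} (hC : Convex ℝ C) {p q x : ℂ} {r δ : ℝ}
    (hδ : 0 ≤ δ) (hr : 0 ≤ r) (hq : q ∈ C) (hqp : dist q p ≤ r)
    (hx : x ∈ C) (hxp : dist x p ≤ r + δ) :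
    ∃ x' ∈ C ∩ closedBall p r, dist x x' ≤ Real.sqrt (δ * (2*r + δ)) := by
  set s : ℝ := δ * (2*r + δ) with hs
  have hs0 : 0 ≤ s := by positivity
  set d : ℝ := dist x q with hd
  have hd0 : 0 ≤ d := dist_nonneg
  by_cases hcase : d^2 ≤ s
  · refine ⟨q, ⟨hq, mem_closedBall.2 hqp⟩, ?_⟩
    exact (Real.le_sqrt hd0 hs0).2 hcase
  · push_neg at hcase
    have hdpos : 0 < d := by nlinarith
    set t : ℝ := s / d^2 with ht
    have ht0 : 0 ≤ t := by positivity
    have ht1 : t ≤ 1 := by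
      rw [ht, div_le_one (by positivity)]; linarith
    set x' : ℂ := (1-t)•x + t•q with hx'
    have hmem : x' ∈ C := hC hx hq (by linarith) ht0 (by ring)
    have hball : x' ∈ closedBall p r := by
      rw [mem_closedBall]
      have he : x' - p = (1-t)•(x-p) + t•(q-p) := by rw [hx']; module
      have hid : ‖x' - p‖^2 = (1-t)*‖x-p‖^2 + t*‖q-p‖^2 - t*(1-t)*‖(x-p)-(q-p)‖^2 := by
        rw [he]; exact norm_combo_sq _ _ _
      have hxq : ‖(x-p)-(q-p)‖ = d := by rw [hd, dist_eq_norm]; congr 1; ring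
      have h1 : ‖x - p‖ ≤ r + δ := by rwa [← dist_eq_norm]
      have h2 : ‖q - p‖ ≤ r := by rwa [← dist_eq_norm]
      have hn1 : (0:ℝ) ≤ ‖x - p‖ := norm_nonneg _
      have hn2 : (0:ℝ) ≤ ‖q - p‖ := norm_nonneg _
      have htd : t * d^2 = s := by
        rw [ht]; field_simp
      have hsq : ‖x' - p‖^2 ≤ r^2 := by
        rw [hid, hxq]
        have e1 : (1-t)*‖x-p‖^2 ≤ (1-t)*(r+δ)^2 :=
          mul_le_mul_of_nonneg_left (pow_le_pow_left₀ hn1 h1 2) (by linarith)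
        have e2 : t*‖q-p‖^2 ≤ t*r^2 :=
          mul_le_mul_of_nonneg_left (pow_le_pow_left₀ hn2 h2 2) ht0
        have e3 : t*(1-t)*d^2 = (1-t)*s := by rw [← htd]; ring
        have e4 : (1-t)*(r+δ)^2 + t*r^2 - (1-t)*s = r^2 := by rw [hs]; ring
        linarith
      have : ‖x' - p‖ ≤ r := by nlinarith [norm_nonneg (x' - p)]
      rwa [dist_eq_norm]
    refine ⟨x', ⟨hmem, hball⟩, ?_⟩
    have hdist : dist x x' = t * d := by
      rw [dist_eq_norm, hx', hd, dist_eq_norm]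
      have : x - ((1-t)•x + t•q) = t • (x - q) := by module
      rw [this, norm_smul, Real.norm_eq_abs, abs_of_nonneg ht0]
    rw [hdist]
    have hsqrt : Real.sqrt s < d := by
      have := Real.sqrt_lt_sqrt hs0 hcase
      rwa [Real.sqrt_sq hd0] at this
    have : t * d = s / d := by rw [ht]; field_simp
    rw [this, div_le_iff₀ hdpos]
    calc s = Real.sqrt s * Real.sqrt s := (Real.mul_self_sqrt hs0).symm
    _ ≤ Real.sqrt s * d := by nlinarith [Real.sqrt_nonneg s]

theorem stmt_0 (X : ℕ → Set ℂ) (Xs : Set ℂ)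
    (hne : ∀ n, (X n).Nonempty) (hcpt : ∀ n, IsCompact (X n))
    (hconv : ∀ n, Convex ℝ (X n))
    (hXsne : Xs.Nonempty) (hXsc : IsCompact Xs)
    (hlim : Tendsto (fun n => hausdorffDist (X n) Xs) atTop (nhds 0))
    (p : ℂ) (r : ℝ) (hr : 0 < r) (hb : ∀ n, infDist p (X n) ≤ r) :
    (Xs ∩ closedBall p r).Nonempty ∧
      Tendsto (fun n => hausdorffDist (X n ∩ closedBall p r) (Xs ∩ closedBall p r))
        atTop (nhds 0) := by
  set f : ℕ → ℝ := fun n => hausdorffDist (X n) Xs with hf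
  have hf0 : ∀ n, 0 ≤ f n := fun n => hausdorffDist_nonneg
  have hedist : ∀ n, EMetric.hausdorffEdist (X n) Xs ≠ ⊤ := fun n =>
    hausdorffEdist_ne_top_of_nonempty_of_bounded (hne n) hXsne (hcpt n).isBounded hXsc.isBounded
  have hXtoXs : ∀ n, ∀ x ∈ X n, ∃ y ∈ Xs, dist x y ≤ f n := by
    intro n x hx
    obtain ⟨y, hy, hyd⟩ := hXsc.exists_infDist_eq_dist hXsne x
    exact ⟨y, hy, by rw [← hyd]; exact infDist_le_hausdorffDist_of_mem hx (hedist n)⟩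
  have hXstoX : ∀ n, ∀ y ∈ Xs, ∃ x ∈ X n, dist y x ≤ f n := by
    intro n y hy
    obtain ⟨x, hx, hxd⟩ := (hcpt n).exists_infDist_eq_dist (hne n) y
    refine ⟨x, hx, ?_⟩
    rw [← hxd]
    have h := infDist_le_hausdorffDist_of_mem hy
      (by rw [EMetric.hausdorffEdist_comm]; exact hedist n)
    rwa [hausdorffDist_comm] at h
  -- Xs is convex
  have hXsconv : Convex ℝ Xs := by
    intro y1 h1 y2 h2 a b ha hb' hab
    have hcl : a • y1 + b • y2 ∈ closure Xs := by
      rw [Metric.mem_closure_iff]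
      intro ε hε
      have hev : ∀ᶠ n in atTop, f n < ε / 3 :=
        (tendsto_order.1 hlim).2 _ (by linarith)
      obtain ⟨n, hn⟩ := hev.exists
      obtain ⟨x1, hx1, hx1d⟩ := hXstoX n y1 h1
      obtain ⟨x2, hx2, hx2d⟩ := hXstoX n y2 h2
      have hw : a • x1 + b • x2 ∈ X n := hconv n hx1 hx2 ha hb' hab
      obtain ⟨y, hy, hyd⟩ := hXtoXs n _ hw
      refine ⟨y, hy, ?_⟩
      have hzw : dist (a • y1 + b • y2) (a • x1 + b • x2) ≤ a * dist y1 x1 + b * dist y2 x2 := by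
        simp only [dist_eq_norm]
        have : a • y1 + b • y2 - (a • x1 + b • x2) = a • (y1 - x1) + b • (y2 - x2) := by module
        rw [this]
        calc ‖a • (y1 - x1) + b • (y2 - x2)‖ ≤ ‖a • (y1 - x1)‖ + ‖b • (y2 - x2)‖ :=
              norm_add_le _ _
        _ = a * ‖y1 - x1‖ + b * ‖y2 - x2‖ := by
              rw [norm_smul, norm_smul, Real.norm_eq_abs, Real.norm_eq_abs,
                abs_of_nonneg ha, abs_of_nonneg hb']
      have h3 : a * dist y1 x1 + b * dist y2 x2 ≤ f n := by
        calc a * dist y1 x1 + b * dist y2 x2 ≤ a * f n + b * f n := by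
              gcongr
        _ = f n := by rw [← add_mul, hab, one_mul]
      calc dist (a • y1 + b • y2) y ≤ dist (a • y1 + b • y2) (a • x1 + b • x2) + dist _ y :=
            dist_triangle _ _ _
      _ ≤ f n + f n := add_le_add (hzw.trans h3) hyd
      _ < ε := by linarith
    rwa [hXsc.isClosed.closure_eq] at hcl
  -- infDist p Xs ≤ r
  have hpXs : infDist p Xs ≤ r := by
    have hle : ∀ n, infDist p Xs ≤ r + f n := by
      intro n
      calc infDist p Xs ≤ infDist p (X n) + f n :=
            infDist_le_infDist_add_hausdorffDist (hedist n)
      _ ≤ r + f n := by linarith [hb n]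
    have htend : Tendsto (fun n => r + f n) atTop (nhds r) := by
      have := tendsto_const_nhds (x := r) (f := atTop (α := ℕ)) |>.add hlim
      simpa using this
    exact ge_of_tendsto htend (Eventually.of_forall hle)
  -- the base point in Xs ∩ ball
  obtain ⟨qs, hqs, hqsd⟩ := hXsc.exists_infDist_eq_dist hXsne p
  have hqsp : dist qs p ≤ r := by rw [dist_comm, ← hqsd]; exact hpXs
  have hXsB : (Xs ∩ closedBall p r).Nonempty := ⟨qs, hqs, mem_closedBall.2 hqsp⟩
  refine ⟨hXsB, ?_⟩
  -- base points in X n ∩ ball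
  have hXnB : ∀ n, ∃ q ∈ X n, dist q p ≤ r := by
    intro n
    obtain ⟨q, hq, hqd⟩ := (hcpt n).exists_infDist_eq_dist (hne n) p
    exact ⟨q, hq, by rw [dist_comm, ← hqd]; exact hb n⟩
  -- the quantitative bound
  set g : ℕ → ℝ := fun n => f n + Real.sqrt (f n * (2*r + f n)) with hg
  have hg0 : ∀ n, 0 ≤ g n := by
    intro n
    have := Real.sqrt_nonneg (f n * (2*r + f n))
    have := hf0 n
    simp only [hg]; linarith
  have hbound : ∀ n, hausdorffDist (X n ∩ closedBall p r) (Xs ∩ closedBall p r) ≤ g n := by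
    intro n
    obtain ⟨qn, hqn, hqnp⟩ := hXnB n
    apply hausdorffDist_le_of_mem_dist (hg0 n)
    · rintro x ⟨hx, hxB⟩
      obtain ⟨y, hy, hyd⟩ := hXtoXs n x hx
      have hyp : dist y p ≤ r + f n := by
        calc dist y p ≤ dist y x + dist x p := dist_triangle _ _ _
        _ ≤ f n + r := add_le_add (by rwa [dist_comm]) (mem_closedBall.1 hxB)
        _ = r + f n := by ring
      obtain ⟨y', hy', hy'd⟩ := seg_lemma hXsconv (hf0 n) hr.le hqs hqsp hy hyp
      refine ⟨y', hy', ?_⟩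
      calc dist x y' ≤ dist x y + dist y y' := dist_triangle _ _ _
      _ ≤ f n + Real.sqrt (f n * (2*r + f n)) := add_le_add hyd hy'd
    · rintro y ⟨hy, hyB⟩
      obtain ⟨x, hx, hxd⟩ := hXstoX n y hy
      have hxp : dist x p ≤ r + f n := by
        calc dist x p ≤ dist x y + dist y p := dist_triangle _ _ _
        _ ≤ f n + r := add_le_add (by rwa [dist_comm]) (mem_closedBall.1 hyB)
        _ = r + f n := by ring
      obtain ⟨x', hx', hx'd⟩ := seg_lemma (hconv n) (hf0 n) hr.le hqn hqnp hx hxp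
      refine ⟨x', hx', ?_⟩
      calc dist y x' ≤ dist y x + dist x x' := dist_triangle _ _ _
      _ ≤ f n + Real.sqrt (f n * (2*r + f n)) := add_le_add hxd hx'd
  -- g → 0
  have hgtend : Tendsto g atTop (nhds 0) := by
    have h1 : Tendsto (fun n => f n * (2*r + f n)) atTop (nhds 0) := by
      have := hlim.mul ((tendsto_const_nhds (x := 2*r)).add hlim)
      simpa using this
    have h2 : Tendsto (fun n => Real.sqrt (f n * (2*r + f n))) atTop (nhds 0) := by
      have := (Real.continuous_sqrt.tendsto 0).comp h1
      simpa [Function.comp_def] using this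
    have := hlim.add h2
    simpa using this
  exact squeeze_zero (fun n => hausdorffDist_nonneg) hbound hgtend
end

section
/- Let A be a convex disk in ℝ², let U be a similarity of A with radius r₀ > 0, and let ρ > 0. Let D = {p ∈ ℝ² : dist(p, U) ≤ ρ·diam(A)}. If V₁, …, V_n are pairwise disjoint similarities of A, each of radius at least ρ and each intersecting U, then n ≤ area(D) / (ρ² · area(A)). -/
open Metric Filter Set MeasureTheory

/-- A convex disk: a compact convex subset of the plane with non-empty interior. -/
def IsConvexDisk (A : Set ℂ) : Prop :=
  Convex ℝ A ∧ IsCompact A ∧ (interior A).Nonempty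

/-- A similarity of `A` with radius `r`: a rotated, scaled (by `r`) and translated copy. -/
def IsSimilarityOf (r : ℝ) (A X : Set ℂ) : Prop :=
  0 < r ∧ ∃ w z : ℂ, ‖w‖ = r ∧ X = (fun a => w * a + z) '' A

lemma vol_sim (w z : ℂ) (A : Set ℂ) :
    volume ((fun a => w * a + z) '' A) = ENNReal.ofReal (‖w‖ ^ 2) * volume A := by
  have h1 : (fun a => w * a + z) '' A = (fun b => b + z) '' ((Algebra.lmul ℝ ℂ w) '' A) := by
    rw [Set.image_image]; rfl
  rw [h1, Set.image_add_right, measure_preimage_add_right,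
    Measure.addHaar_image_linearMap]
  congr 2
  have : LinearMap.det ((Algebra.lmul ℝ ℂ) w) = Complex.normSq w := by
    rw [← Algebra.norm_apply, Algebra.norm_complex_apply]
  rw [this, abs_of_nonneg (Complex.normSq_nonneg w), Complex.sq_norm]

lemma sim_convex {A X : Set ℂ} (hA : Convex ℝ A) {w z : ℂ}
    (hX : X = (fun a => w * a + z) '' A) : Convex ℝ X := by
  subst hX
  rintro _ ⟨a, ha, rfl⟩ _ ⟨b, hb, rfl⟩ s t hs ht hst
  refine ⟨s • a + t • b, hA ha hb hs ht hst, ?_⟩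
  simp only [Complex.real_smul]
  have hst' : (t : ℂ) = 1 - (s : ℂ) := by exact_mod_cast (show t = 1 - s by linarith)
  rw [hst']; ring

lemma sim_diam {A X : Set ℂ} (hAb : Bornology.IsBounded A) {r : ℝ} (hr : 0 < r) {w z : ℂ}
    (hw : ‖w‖ = r) (hX : X = (fun a => w * a + z) '' A) :
    Metric.diam X ≤ r * Metric.diam A := by
  subst hX
  apply Metric.diam_le_of_forall_dist_le (by positivity)
  rintro _ ⟨a, ha, rfl⟩ _ ⟨b, hb, rfl⟩
  have : dist (w * a + z) (w * b + z) = r * dist a b := by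
    simp only [Complex.dist_eq, ← hw]
    rw [← norm_mul]
    ring_nf
  rw [this]
  exact mul_le_mul_of_nonneg_left (Metric.dist_le_diam_of_mem hAb ha hb) hr.le

theorem stmt_4 (A U : Set ℂ) (hA : IsConvexDisk A) (r₀ ρ : ℝ) (hρ : 0 < ρ)
    (hU : IsSimilarityOf r₀ A U)
    (n : ℕ) (V : Fin n → Set ℂ) (rv : Fin n → ℝ)
    (hV : ∀ i, IsSimilarityOf (rv i) A (V i)) (hrv : ∀ i, ρ ≤ rv i)
    (hint : ∀ i, (V i ∩ U).Nonempty)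
    (hdisj : ∀ i j, i ≠ j → Disjoint (V i) (V j)) :
    (n : ℝ) ≤ (volume {p : ℂ | infDist p U ≤ ρ * Metric.diam A}).toReal /
      (ρ ^ 2 * (volume A).toReal) := by
  obtain ⟨hAconv, hAcomp, hAint⟩ := hA
  have hAne : A.Nonempty := hAint.mono interior_subset
  have hAb : Bornology.IsBounded A := hAcomp.isBounded
  set D : Set ℂ := {p : ℂ | infDist p U ≤ ρ * Metric.diam A} with hD
  -- construct the shrunken copies
  have key : ∀ i, ∃ W : Set ℂ, W ⊆ V i ∧ W ⊆ D ∧ MeasurableSet W ∧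
      volume W = ENNReal.ofReal (ρ ^ 2) * volume A := by
    intro i
    obtain ⟨hri, w, z, hw, hVi⟩ := hV i
    obtain ⟨x, hxV, hxU⟩ := hint i
    set c : ℝ := ρ / rv i with hc
    have hc0 : 0 < c := div_pos hρ hri
    have hc1 : c ≤ 1 := (div_le_one hri).2 (hrv i)
    have hcr : c * rv i = ρ := div_mul_cancel₀ ρ hri.ne'
    refine ⟨(fun a => ((c : ℂ) * w) * a + ((c : ℂ) * z + (1 - (c : ℂ)) * x)) '' A,
      ?_, ?_, ?_, ?_⟩
    · -- W ⊆ V i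
      rintro _ ⟨a, ha, rfl⟩
      have hVconv : Convex ℝ (V i) := sim_convex hAconv hVi
      have hv : w * a + z ∈ V i := hVi ▸ ⟨a, ha, rfl⟩
      have := hVconv hv hxV (a := c) (b := 1 - c) hc0.le (by linarith) (by ring)
      convert this using 1
      simp only [Complex.real_smul]
      push_cast
      ring
    · -- W ⊆ D
      rintro _ ⟨a, ha, rfl⟩
      set p := ((c : ℂ) * w) * a + ((c : ℂ) * z + (1 - (c : ℂ)) * x) with hp
      have hVb : Bornology.IsBounded (V i) := by
        rw [hVi]
        exact (hAcomp.image (by fun_prop)).isBounded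
      have hv : w * a + z ∈ V i := hVi ▸ ⟨a, ha, rfl⟩
      have hdist : dist p x = c * dist (w * a + z) x := by
        simp only [Complex.dist_eq, hp]
        have : (c : ℂ) * w * a + ((c : ℂ) * z + (1 - (c : ℂ)) * x) - x
            = (c : ℂ) * ((w * a + z) - x) := by ring
        rw [this, norm_mul, Complex.norm_real, Real.norm_eq_abs, abs_of_pos hc0]
      have hdU : Metric.diam (V i) ≤ rv i * Metric.diam A := sim_diam hAb hri hw hVi
      have h1 : dist p x ≤ ρ * Metric.diam A := by
        rw [hdist]
        calc c * dist (w * a + z) x ≤ c * (rv i * Metric.diam A) := by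
              apply mul_le_mul_of_nonneg_left _ hc0.le
              exact (Metric.dist_le_diam_of_mem hVb hv hxV).trans hdU
          _ = ρ * Metric.diam A := by rw [← mul_assoc, hcr]
      exact le_trans (Metric.infDist_le_dist_of_mem hxU) h1
    · exact (hAcomp.image (by fun_prop)).measurableSet
    · rw [vol_sim]
      congr 2
      rw [norm_mul, Complex.norm_real, Real.norm_eq_abs, abs_of_pos hc0, hw, hcr]
  choose W hWV hWD hWmeas hWvol using key
  -- volume estimates
  have hWdisj : Pairwise (Function.onFun Disjoint W) := fun i j hij =>
    (hdisj i j hij).mono (hWV i) (hWV j)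
  have hsum : (n : ENNReal) * (ENNReal.ofReal (ρ ^ 2) * volume A) ≤ volume D := by
    calc (n : ENNReal) * (ENNReal.ofReal (ρ ^ 2) * volume A)
        = ∑ i : Fin n, volume (W i) := by
          simp [hWvol, Finset.sum_const, nsmul_eq_mul]
      _ = volume (⋃ i, W i) := by
          rw [measure_iUnion hWdisj hWmeas, tsum_fintype]
      _ ≤ volume D := measure_mono (iUnion_subset hWD)
  -- D has finite volume
  have hUcomp : IsCompact U := by
    obtain ⟨_, w, z, _, hUeq⟩ := hU
    rw [hUeq]; exact hAcomp.image (by fun_prop)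
  have hUne : U.Nonempty := by
    obtain ⟨_, w, z, _, hUeq⟩ := hU
    exact hUeq ▸ hAne.image _
  obtain ⟨u0, hu0⟩ := hUne
  have hDfin : volume D ≠ ⊤ := by
    have hsub : D ⊆ Metric.closedBall u0 (ρ * Metric.diam A + Metric.diam U) := by
      intro p hp
      obtain ⟨y, hyU, hy⟩ := hUcomp.exists_infDist_eq_dist ⟨u0, hu0⟩ p
      have h1 : dist p y ≤ ρ * Metric.diam A := hy ▸ hp
      have h2 : dist y u0 ≤ Metric.diam U :=
        Metric.dist_le_diam_of_mem hUcomp.isBounded hyU hu0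
      calc dist p u0 ≤ dist p y + dist y u0 := dist_triangle _ _ _
        _ ≤ ρ * Metric.diam A + Metric.diam U := add_le_add h1 h2
    exact ((measure_mono hsub).trans_lt (measure_closedBall_lt_top)).ne
  -- positivity of volume A
  have hApos : 0 < volume A := Measure.measure_pos_of_nonempty_interior _ hAint
  have hAfin : volume A ≠ ⊤ := hAcomp.measure_lt_top.ne
  have hAtr : 0 < (volume A).toReal := ENNReal.toReal_pos hApos.ne' hAfin
  have hden : 0 < ρ ^ 2 * (volume A).toReal := mul_pos (pow_pos hρ 2) hAtr
  rw [le_div_iff₀ hden]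
  have hmono := ENNReal.toReal_mono hDfin hsum
  simpa [ENNReal.toReal_mul, ENNReal.toReal_ofReal (sq_nonneg ρ)] using hmono
end

section
/- For every convex disk A and every ε > 0, there exists n₀ ∈ ℕ such that for all n ≥ n₀: whenever U₁, U₂, V₁, …, V_n are similarities of A such that each V_i intersects both U₁ and U₂, and V₁, …, V_n are pairwise disjoint, then min_{i∈[n]} r(V_i) < ε · min{r(U₁), r(U₂)}, where r(X) denotes the radius (scale factor) of the similarity X. -/
open Metric Filter Set

open MeasureTheory ENNReal NNReal in
lemma ball_count {n : ℕ} (q : Fin n → ℂ) (s R : ℝ) (hs : 0 < s) (x₀ : ℂ)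
    (hdisj : ∀ i j : Fin n, i ≠ j → Disjoint (Metric.ball (q i) s) (Metric.ball (q j) s))
    (hsub : ∀ i, Metric.ball (q i) s ⊆ Metric.closedBall x₀ R) :
    (n : ℝ) * s ^ 2 ≤ R ^ 2 := by
  rcases n.eq_zero_or_pos with h | h
  · subst h; simpa using sq_nonneg R
  have hR : 0 ≤ R := by
    have i : Fin n := ⟨0, h⟩
    exact le_trans dist_nonneg (mem_closedBall.1 (hsub i (mem_ball_self hs)))
  have hvol : volume (⋃ i, Metric.ball (q i) s) = ∑ i : Fin n, volume (Metric.ball (q i) s) := by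
    rw [measure_iUnion (fun i j hij => hdisj i j hij) (fun i => measurableSet_ball),
      tsum_fintype]
  have hle : volume (⋃ i, Metric.ball (q i) s) ≤ volume (Metric.closedBall x₀ R) :=
    measure_mono (iUnion_subset hsub)
  rw [hvol] at hle
  simp only [Complex.volume_ball, Complex.volume_closedBall, Finset.sum_const,
    Finset.card_univ, Fintype.card_fin, nsmul_eq_mul] at hle
  have hπ : (NNReal.pi : ℝ≥0∞) ≠ 0 := by simpa using NNReal.pi_ne_zero
  have hπ' : (NNReal.pi : ℝ≥0∞) ≠ ⊤ := ENNReal.coe_ne_top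
  have hle2 : (n : ℝ≥0∞) * ENNReal.ofReal s ^ 2 ≤ ENNReal.ofReal R ^ 2 := by
    rw [← mul_assoc] at hle
    exact (ENNReal.mul_le_mul_iff_left hπ hπ').1 hle
  have : ENNReal.ofReal ((n : ℝ) * s ^ 2) ≤ ENNReal.ofReal (R ^ 2) := by
    rw [ENNReal.ofReal_mul (by positivity), ENNReal.ofReal_pow hs.le,
      ENNReal.ofReal_pow hR, ENNReal.ofReal_natCast]
    exact hle2
  exact (ENNReal.ofReal_le_ofReal_iff (by positivity)).1 this

lemma simil_ball {A : Set ℂ} (hconv : Convex ℝ A) {a : ℂ} {ρ : ℝ}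
    (hball : Metric.ball a ρ ⊆ A) {w z : ℂ} {r : ℝ} (hr : 0 < r)
    (hw : ‖w‖ = r) {p' : ℂ} (hp' : p' ∈ A) {t : ℝ} (ht0 : 0 < t) (ht1 : t ≤ 1) :
    Metric.ball ((w * p' + z) + (t : ℂ) * ((w * a + z) - (w * p' + z))) (r * t * ρ) ⊆
      (fun x => w * x + z) '' A := by
  intro y hy
  set q : ℂ := (w * p' + z) + (t : ℂ) * ((w * a + z) - (w * p' + z)) with hq
  have hw0 : w ≠ 0 := by
    intro h; rw [h, norm_zero] at hw; exact hr.ne hw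
  have ht0' : (t : ℂ) ≠ 0 := by exact_mod_cast ht0.ne'
  set x' : ℂ := a + (y - q) / (w * (t : ℂ)) with hx'def
  have hdist : ‖y - q‖ < r * t * ρ := by
    rw [mem_ball] at hy
    simpa [Complex.dist_eq] using hy
  have hx'A : x' ∈ A := by
    apply hball
    rw [mem_ball, Complex.dist_eq]
    have : x' - a = (y - q) / (w * (t : ℂ)) := by rw [hx'def]; ring
    rw [this, norm_div, norm_mul, hw, Complex.norm_real, Real.norm_eq_abs, abs_of_pos ht0]
    rw [div_lt_iff₀ (by positivity)]
    calc ‖y - q‖ < r * t * ρ := hdist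
    _ = ρ * (r * t) := by ring
  refine ⟨(1 - t) • p' + t • x', hconv hp' hx'A (by linarith) ht0.le (by ring), ?_⟩
  show w * ((1 - t) • p' + t • x') + z = y
  simp only [Complex.real_smul, hx'def, Complex.ofReal_sub, Complex.ofReal_one, hq]
  field_simp
  ring

lemma aux_one (A : Set ℂ) (hA : IsConvexDisk A) (ε : ℝ) (hε : 0 < ε) :
    ∃ n₀ : ℕ, ∀ n ≥ n₀, ∀ (U : Set ℂ) (rU : ℝ) (V : Fin n → Set ℂ) (rv : Fin n → ℝ),
      IsSimilarityOf rU A U → (∀ i, IsSimilarityOf (rv i) A (V i)) →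
      (∀ i, (V i ∩ U).Nonempty) → (∀ i j, i ≠ j → Disjoint (V i) (V j)) →
      (∀ i, ε * rU ≤ rv i) → False := by
  obtain ⟨hconv, hcomp, a, ha⟩ := hA
  have haA : a ∈ A := interior_subset ha
  obtain ⟨ρ, hρ, hball⟩ := Metric.isOpen_iff.1 isOpen_interior a ha
  have hballA : Metric.ball a ρ ⊆ A := hball.trans interior_subset
  set D := Metric.diam A with hD
  have hbdd : Bornology.IsBounded A := hcomp.isBounded
  have hdiam : ∀ x ∈ A, ∀ y ∈ A, dist x y ≤ D := fun x hx y hy =>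
    Metric.dist_le_diam_of_mem hbdd hx hy
  have hρD : ρ ≤ D := by
    have h1 : a + (ρ / 2 : ℝ) ∈ A := by
      apply hballA; rw [mem_ball]
      simp [Complex.dist_eq, Complex.norm_real, abs_of_pos hρ]
      linarith
    have h2 : a - (ρ / 2 : ℝ) ∈ A := by
      apply hballA; rw [mem_ball]
      simp [Complex.dist_eq, Complex.norm_real, abs_of_pos hρ]
      linarith
    have := hdiam _ h1 _ h2
    rw [Complex.dist_eq] at this
    have he : (a + (ρ / 2 : ℝ)) - (a - (ρ / 2 : ℝ)) = ((ρ : ℝ) : ℂ) := by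
      push_cast; ring
    rw [he, Complex.norm_real, Real.norm_eq_abs, abs_of_pos hρ] at this
    exact this
  have hDpos : 0 < D := lt_of_lt_of_le hρ hρD
  set K : ℝ := (D + ε * ρ) * (2 * D / (ε * ρ ^ 2)) + 1 with hK
  refine ⟨⌈K ^ 2⌉₊ + 1, fun n hn U rU V rv hU hV hVU hdisj hbig => ?_⟩
  obtain ⟨hrU, wU, zU, hwU, hUeq⟩ := hU
  choose hri w z hw hX using hV
  choose p hpV hpU using hVU
  -- preimages of p i in A
  have hp' : ∀ i, ∃ p' ∈ A, w i * p' + z i = p i := by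
    intro i
    have := hpV i
    rw [hX i] at this
    obtain ⟨x, hx, hxx⟩ := this
    exact ⟨x, hx, hxx⟩
  choose p' hp'A hp'eq using hp'
  set t : Fin n → ℝ := fun i => ε * rU * ρ / (rv i * D) with ht
  have ht0 : ∀ i, 0 < t i := fun i => by
    have := hri i; positivity
  have ht1 : ∀ i, t i ≤ 1 := fun i => by
    rw [ht, div_le_one (by have := hri i; positivity)]
    have h1 : ε * rU ≤ rv i := hbig i
    nlinarith [hri i, mul_pos hε hrU]
  have hrt : ∀ i, rv i * t i = ε * rU * ρ / D := fun i => by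
    rw [ht]
    field_simp [(hri i).ne', hDpos.ne']
  set s : ℝ := ε * rU * ρ ^ 2 / (2 * D) with hs
  have hs0 : 0 < s := by positivity
  set q : Fin n → ℂ := fun i =>
    (w i * p' i + z i) + ((t i : ℝ) : ℂ) * ((w i * a + z i) - (w i * p' i + z i)) with hqdef
  have hqball : ∀ i, Metric.ball (q i) s ⊆ V i := by
    intro i
    have h2s : s ≤ rv i * t i * ρ := by
      have h1 : rv i * t i * ρ = 2 * s := by
        rw [hrt i, hs]; field_simp
      rw [h1]; linarith
    refine (Metric.ball_subset_ball h2s).trans ?_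
    rw [hX i]
    exact simil_ball hconv hballA (hri i) (hw i) (hp'A i) (ht0 i) (ht1 i)
  -- distance bounds
  have hqp : ∀ i, dist (q i) (p i) ≤ ε * rU * ρ := by
    intro i
    rw [hqdef, ← hp'eq i, Complex.dist_eq]
    have he : (w i * p' i + z i) + ((t i : ℝ) : ℂ) * ((w i * a + z i) - (w i * p' i + z i))
        - (w i * p' i + z i) = ((t i : ℝ) : ℂ) * (w i * (a - p' i)) := by ring
    rw [he, norm_mul, norm_mul, Complex.norm_real, Real.norm_eq_abs, abs_of_pos (ht0 i), hw i]
    have hd : ‖a - p' i‖ ≤ D := by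
      rw [← Complex.dist_eq]; exact hdiam a haA _ (hp'A i)
    calc t i * (rv i * ‖a - p' i‖) ≤ t i * (rv i * D) := by
          apply mul_le_mul_of_nonneg_left _ (ht0 i).le
          exact mul_le_mul_of_nonneg_left hd (hri i).le
      _ = (rv i * t i) * D := by ring
      _ = (ε * rU * ρ / D) * D := by rw [hrt i]
      _ = ε * rU * ρ := by field_simp
  set x₀ : ℂ := wU * a + zU with hx₀
  have hpx₀ : ∀ i, dist (p i) x₀ ≤ rU * D := by
    intro i
    have := hpU i
    rw [hUeq] at this
    obtain ⟨x, hx, hxx⟩ := this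
    rw [← hxx, hx₀, Complex.dist_eq]
    have he : (wU * x + zU) - (wU * a + zU) = wU * (x - a) := by ring
    rw [he, norm_mul, hwU]
    have hd : ‖x - a‖ ≤ D := by
      rw [← Complex.dist_eq]; exact hdiam x hx a haA
    exact mul_le_mul_of_nonneg_left hd hrU.le
  set R : ℝ := rU * D + ε * rU * ρ + s with hR
  have hsub : ∀ i, Metric.ball (q i) s ⊆ Metric.closedBall x₀ R := by
    intro i y hy
    rw [mem_ball] at hy
    rw [mem_closedBall]
    calc dist y x₀ ≤ dist y (q i) + dist (q i) (p i) + dist (p i) x₀ := dist_triangle4 y (q i) (p i) x₀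
      _ ≤ s + ε * rU * ρ + rU * D := by
          have := hqp i; have := hpx₀ i; linarith
      _ = R := by rw [hR]; ring
  have hdb : ∀ i j : Fin n, i ≠ j → Disjoint (Metric.ball (q i) s) (Metric.ball (q j) s) :=
    fun i j hij => (hdisj i j hij).mono (hqball i) (hqball j)
  have hcount : (n : ℝ) * s ^ 2 ≤ R ^ 2 := ball_count q s R hs0 x₀ hdb hsub
  have hRKs : R = K * s := by
    rw [hR, hK, hs]
    field_simp
  have hnK : (n : ℝ) ≤ K ^ 2 := by
    rw [hRKs, mul_pow] at hcount
    exact le_of_mul_le_mul_right hcount (by positivity)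
  have hceil : K ^ 2 ≤ (⌈K ^ 2⌉₊ : ℝ) := Nat.le_ceil _
  have hn' : ((⌈K ^ 2⌉₊ + 1 : ℕ) : ℝ) ≤ (n : ℝ) := Nat.cast_le.2 hn
  push_cast at hn'
  linarith


theorem stmt_5 (A : Set ℂ) (hA : IsConvexDisk A) (ε : ℝ) (hε : 0 < ε) :
    ∃ n₀ : ℕ, ∀ n ≥ n₀, ∀ (U₁ U₂ : Set ℂ) (r₁ r₂ : ℝ)
      (V : Fin n → Set ℂ) (rv : Fin n → ℝ),
      IsSimilarityOf r₁ A U₁ → IsSimilarityOf r₂ A U₂ →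
      (∀ i, IsSimilarityOf (rv i) A (V i)) →
      (∀ i, (V i ∩ U₁).Nonempty ∧ (V i ∩ U₂).Nonempty) →
      (∀ i j, i ≠ j → Disjoint (V i) (V j)) →
      ∃ i, rv i < ε * min r₁ r₂ := by
  obtain ⟨n₀, h⟩ := aux_one A hA ε hε
  refine ⟨n₀, fun n hn U₁ U₂ r₁ r₂ V rv hU₁ hU₂ hV hint hdisj => ?_⟩
  by_contra hc
  push_neg at hc
  rcases le_total r₁ r₂ with h12 | h12
  · exact h n hn U₁ r₁ V rv hU₁ hV (fun i => (hint i).1) hdisj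
      (fun i => by simpa [min_eq_left h12] using hc i)
  · exact h n hn U₂ r₂ V rv hU₂ hV (fun i => (hint i).2) hdisj
      (fun i => by simpa [min_eq_right h12] using hc i)
end

section
/- Let A be a convex disk. For every ε' > 0, there exists n₀ ∈ ℕ such that for all n ≥ n₀: whenever U₁, U₂, V₁, …, V_n are similarities of A such that each V_i intersects both U₁ and U₂ and V₁, …, V_n are pairwise disjoint, then dist(U₁, U₂) < ε' · min{r(U₁), r(U₂)}. -/
open Metric Filter Set

/-- The distance between two sets: the infimum of pairwise distances. -/
noncomputable def setDist (X Y : Set ℂ) : ℝ := sInf (Set.image2 dist X Y)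

lemma setDist_le {X Y : Set ℂ} {p q : ℂ} (hp : p ∈ X) (hq : q ∈ Y) :
    setDist X Y ≤ dist p q := by
  apply csInf_le
  · exact ⟨0, by rintro d ⟨a, ha, b, hb, rfl⟩; exact dist_nonneg⟩
  · exact ⟨p, hp, q, hq, rfl⟩

lemma sim_struct {A : Set ℂ} (hconv : Convex ℝ A) (hbdd : Bornology.IsBounded A)
    {a₀ : ℂ} {ρ : ℝ} (hρ : 0 < ρ) (hball : ball a₀ ρ ⊆ A) {r : ℝ} {X : Set ℂ}
    (h : IsSimilarityOf r A X) :
    Convex ℝ X ∧ ∃ c, ball c (ρ * r) ⊆ X ∧ X ⊆ closedBall c (diam A * r) := by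
  obtain ⟨hr, w, z, hw, rfl⟩ := h
  have hw0 : w ≠ 0 := by
    intro h0; rw [h0] at hw; simp at hw; linarith
  have ha₀ : a₀ ∈ A := hball (mem_ball_self hρ)
  refine ⟨?_, w * a₀ + z, ?_, ?_⟩
  · rintro _ ⟨a, ha, rfl⟩ _ ⟨b, hb, rfl⟩ s t hs ht hst
    refine ⟨s • a + t • b, hconv ha hb hs ht hst, ?_⟩
    have hst' : (s : ℂ) + (t : ℂ) = 1 := by exact_mod_cast congrArg (Complex.ofReal) hst
    simp only [Complex.real_smul]
    linear_combination (-z) * hst'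
  · intro v hv
    refine ⟨(v - z) / w, hball ?_, ?_⟩
    · rw [mem_ball, Complex.dist_eq]
      have h1 : (v - z) / w - a₀ = (v - (w * a₀ + z)) / w := by field_simp; ring
      rw [h1, norm_div, hw, div_lt_iff₀ hr]
      rw [mem_ball, Complex.dist_eq] at hv
      exact hv
    · show w * ((v - z) / w) + z = v
      field_simp
      ring
  · rintro _ ⟨a, ha, rfl⟩
    rw [mem_closedBall, Complex.dist_eq]
    have h1 : w * a + z - (w * a₀ + z) = w * (a - a₀) := by ring
    rw [h1, norm_mul, hw]
    have hd : ‖a - a₀‖ ≤ diam A := by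
      rw [← Complex.dist_eq]; exact dist_le_diam_of_mem hbdd ha ha₀
    calc r * ‖a - a₀‖ ≤ r * diam A := mul_le_mul_of_nonneg_left hd hr.le
      _ = diam A * r := mul_comm _ _

lemma key (A : Set ℂ) (hA : IsConvexDisk A) (ε' : ℝ) (hε' : 0 < ε') :
    ∃ n₀ : ℕ, ∀ n ≥ n₀, ∀ (U : Set ℂ) (r : ℝ) (V : Fin n → Set ℂ) (rv : Fin n → ℝ),
      IsSimilarityOf r A U → (∀ i, IsSimilarityOf (rv i) A (V i)) →
      (∀ i, ∃ p ∈ V i, ∃ q ∈ V i, ε' * r ≤ dist p q) →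
      (∀ i, (V i ∩ U).Nonempty) →
      (∀ i j, i ≠ j → Disjoint (V i) (V j)) → False := by
  obtain ⟨hconv, hcomp, a₁, ha₁⟩ := hA
  obtain ⟨ρ, hρ, hball'⟩ := Metric.isOpen_iff.mp isOpen_interior a₁ ha₁
  have hball : ball a₁ ρ ⊆ A := hball'.trans interior_subset
  have hbdd := hcomp.isBounded
  have hD : 0 < diam A := by
    have h1 : a₁ + ((ρ/2 : ℝ) : ℂ) ∈ A := hball (by
      rw [mem_ball, Complex.dist_eq]
      have : a₁ + ((ρ/2 : ℝ) : ℂ) - a₁ = ((ρ/2 : ℝ) : ℂ) := by ring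
      rw [this, Complex.norm_real, Real.norm_eq_abs, abs_of_pos (by linarith)]
      linarith)
    have h2 : a₁ ∈ A := hball (mem_ball_self hρ)
    have h3 : dist (a₁ + ((ρ/2 : ℝ) : ℂ)) a₁ ≤ diam A := dist_le_diam_of_mem hbdd h1 h2
    rw [Complex.dist_eq] at h3
    have : a₁ + ((ρ/2 : ℝ) : ℂ) - a₁ = ((ρ/2 : ℝ) : ℂ) := by ring
    rw [this, Complex.norm_real, Real.norm_eq_abs, abs_of_pos (by linarith)] at h3
    linarith
  set D := diam A with hDdef
  set τ := ε' / (2 * D) with hτdef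
  have hτ : 0 < τ := by positivity
  set κ := 2 * D * (1 + τ) / (ρ * τ) with hκdef
  obtain ⟨T, hTfin, hTcov⟩ :=
    (totallyBounded_iff.mp (isCompact_closedBall (0 : ℂ) κ).totallyBounded) 1 one_pos
  refine ⟨hTfin.toFinset.card + 1, ?_⟩
  intro n hn U r V rv hU hV hpair hmeet hdisj
  have hr : 0 < r := hU.1
  obtain ⟨hUconv, u, hu1, hu2⟩ := sim_struct hconv hbdd hρ hball hU
  have hVs := fun i => sim_struct hconv hbdd hρ hball (hV i)
  choose hVconv c hc1 hc2 using hVs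
  have hrv : ∀ i, 0 < rv i := fun i => (hV i).1
  have hrvlb : ∀ i, τ * r ≤ rv i := by
    intro i
    obtain ⟨p, hp, q, hq, hpq⟩ := hpair i
    have h1 : dist p q ≤ 2 * D * rv i := by
      calc dist p q ≤ dist p (c i) + dist (c i) q := dist_triangle _ _ _
        _ ≤ D * rv i + D * rv i :=
            add_le_add (hc2 i hp) (by rw [dist_comm]; exact hc2 i hq)
        _ = 2 * D * rv i := by ring
    rw [hτdef, div_mul_eq_mul_div, div_le_iff₀ (by positivity)]
    nlinarith [hpq.trans h1]
  choose x hxV hxU using fun i => hmeet i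
  set s := ρ * τ * r with hsdef
  have hs : 0 < s := by positivity
  set lam := fun i => τ * r / rv i with hlamdef
  have hlam0 : ∀ i, 0 < lam i := fun i => by
    have := hrv i; have := hτ; positivity
  have hlam1 : ∀ i, lam i ≤ 1 := fun i => (div_le_one (hrv i)).mpr (hrvlb i)
  set c' := fun i => x i + ((lam i : ℝ) : ℂ) * (c i - x i) with hc'def
  -- the small ball inside V i
  have hsball : ∀ i, ball (c' i) s ⊆ V i := by
    intro i y hy
    set v := x i + (y - x i) / ((lam i : ℝ) : ℂ) with hvdef
    have hlamC : ((lam i : ℝ) : ℂ) ≠ 0 := by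
      simp only [ne_eq, Complex.ofReal_eq_zero]; exact (hlam0 i).ne'
    have hv : v ∈ ball (c i) (ρ * rv i) := by
      rw [mem_ball, Complex.dist_eq]
      have h1 : v - c i = (y - c' i) / ((lam i : ℝ) : ℂ) := by
        rw [hvdef, hc'def]; field_simp; ring
      rw [h1, norm_div, Complex.norm_real, Real.norm_eq_abs, abs_of_pos (hlam0 i),
        div_lt_iff₀ (hlam0 i)]
      rw [mem_ball, Complex.dist_eq] at hy
      calc ‖y - c' i‖ < s := hy
        _ = ρ * rv i * lam i := by
            have hl : lam i = τ * r / rv i := rfl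
            rw [hsdef, hl]
            field_simp [(hrv i).ne']
    have hvV : v ∈ V i := hc1 i hv
    have hyy : y = (1 - lam i) • x i + lam i • v := by
      simp only [Complex.real_smul, hvdef]
      push_cast
      field_simp
      ring
    rw [hyy]
    exact hVconv i (hxV i) hvV (by linarith [hlam1 i]) (hlam0 i).le (by ring)
  -- center estimate
  have hc'u : ∀ i, dist (c' i) u ≤ D * (1 + τ) * r := by
    intro i
    have h1 : dist (c' i) (x i) ≤ D * τ * r := by
      rw [hc'def, dist_eq_norm]
      have h2 : x i + ((lam i : ℝ) : ℂ) * (c i - x i) - x i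
          = ((lam i : ℝ) : ℂ) * (c i - x i) := by ring
      rw [h2, norm_mul, Complex.norm_real, Real.norm_eq_abs, abs_of_pos (hlam0 i)]
      have h3 : ‖c i - x i‖ ≤ D * rv i := by
        rw [← dist_eq_norm, dist_comm, ← mem_closedBall]
        exact hc2 i (hxV i)
      calc lam i * ‖c i - x i‖ ≤ lam i * (D * rv i) :=
            mul_le_mul_of_nonneg_left h3 (hlam0 i).le
        _ = D * τ * r := by rw [hlamdef]; field_simp [(hrv i).ne', hD.ne']
    have h4 : dist (x i) u ≤ D * r := by
      have := hu2 (hxU i); rwa [mem_closedBall] at this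
    calc dist (c' i) u ≤ dist (c' i) (x i) + dist (x i) u := dist_triangle _ _ _
      _ ≤ D * τ * r + D * r := add_le_add h1 h4
      _ = D * (1 + τ) * r := by ring
  -- normalized centers lie in the fixed ball
  set y' := fun i => (c' i - u) / ((s / 2 : ℝ) : ℂ) with hy'def
  have hy'κ : ∀ i, y' i ∈ closedBall (0 : ℂ) κ := by
    intro i
    rw [mem_closedBall, dist_zero_right, hy'def, norm_div, Complex.norm_real,
      Real.norm_eq_abs, abs_of_pos (by linarith), div_le_iff₀ (by linarith)]
    have hκs : κ * (s / 2) = D * (1 + τ) * r := by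
      rw [hκdef, hsdef]; field_simp
    rw [← dist_eq_norm, hκs]
    exact hc'u i
  have hmem : ∀ i, ∃ t ∈ T, y' i ∈ ball t 1 := by
    intro i
    have := hTcov (hy'κ i)
    simpa using this
  choose t ht1 ht2 using hmem
  have hcard : Fintype.card {z // z ∈ hTfin.toFinset} < Fintype.card (Fin n) := by
    rw [Fintype.card_coe, Fintype.card_fin]; omega
  obtain ⟨i, j, hij, hfij⟩ := Fintype.exists_ne_map_eq_of_card_lt
    (fun i => (⟨t i, hTfin.mem_toFinset.mpr (ht1 i)⟩ : {z // z ∈ hTfin.toFinset})) hcard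
  have htij : t i = t j := by simpa [Subtype.ext_iff] using hfij
  have hyij : dist (y' i) (y' j) < 2 := by
    calc dist (y' i) (y' j) ≤ dist (y' i) (t i) + dist (t i) (y' j) := dist_triangle _ _ _
      _ < 1 + 1 := by
          refine add_lt_add (ht2 i) ?_
          rw [htij, dist_comm]; exact ht2 j
      _ = 2 := by norm_num
  have hcij : ‖c' i - c' j‖ < s := by
    have h1 : dist (y' i) (y' j) = dist (c' i) (c' j) / (s / 2) := by
      rw [hy'def, dist_eq_norm]
      have h2 : (c' i - u) / ((s / 2 : ℝ) : ℂ) - (c' j - u) / ((s / 2 : ℝ) : ℂ)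
          = (c' i - c' j) / ((s / 2 : ℝ) : ℂ) := by
        rw [div_sub_div_same]; ring_nf
      rw [h2, norm_div, Complex.norm_real, Real.norm_eq_abs, abs_of_pos (by linarith),
        ← dist_eq_norm]
    rw [h1, div_lt_iff₀ (by linarith)] at hyij
    rw [← Complex.dist_eq]
    linarith
  have hMi : (c' i + c' j) / 2 ∈ ball (c' i) s := by
    rw [mem_ball, Complex.dist_eq]
    have h1 : (c' i + c' j) / 2 - c' i = (c' j - c' i) / 2 := by ring
    rw [h1, norm_div, Complex.norm_two, norm_sub_rev]
    linarith
  have hMj : (c' i + c' j) / 2 ∈ ball (c' j) s := by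
    rw [mem_ball, Complex.dist_eq]
    have h1 : (c' i + c' j) / 2 - c' j = (c' i - c' j) / 2 := by ring
    rw [h1, norm_div, Complex.norm_two]
    linarith
  exact Set.disjoint_left.mp (hdisj i j hij) (hsball i hMi) (hsball j hMj)

theorem stmt_6 (A : Set ℂ) (hA : IsConvexDisk A) (ε' : ℝ) (hε' : 0 < ε') :
    ∃ n₀ : ℕ, ∀ n ≥ n₀, ∀ (U₁ U₂ : Set ℂ) (r₁ r₂ : ℝ)
      (V : Fin n → Set ℂ) (rv : Fin n → ℝ),
      IsSimilarityOf r₁ A U₁ → IsSimilarityOf r₂ A U₂ →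
      (∀ i, IsSimilarityOf (rv i) A (V i)) →
      (∀ i, (V i ∩ U₁).Nonempty ∧ (V i ∩ U₂).Nonempty) →
      (∀ i j, i ≠ j → Disjoint (V i) (V j)) →
      setDist U₁ U₂ < ε' * min r₁ r₂ := by
  obtain ⟨n₀, hkey⟩ := key A hA ε' hε'
  refine ⟨n₀, ?_⟩
  intro n hn U₁ U₂ r₁ r₂ V rv h₁ h₂ hV hmeet hdisj
  by_contra hcon
  push_neg at hcon
  have hpair : ∀ i, ∃ p ∈ V i, ∃ q ∈ V i, ε' * min r₁ r₂ ≤ dist p q := by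
    intro i
    obtain ⟨p, hpV, hpU⟩ := (hmeet i).1
    obtain ⟨q, hqV, hqU⟩ := (hmeet i).2
    exact ⟨p, hpV, q, hqV, hcon.trans (setDist_le hpU hqU)⟩
  rcases le_total r₁ r₂ with hle | hle
  · refine hkey n hn U₁ r₁ V rv h₁ hV ?_ (fun i => (hmeet i).1) hdisj
    intro i
    obtain ⟨p, hpV, q, hqV, hpq⟩ := hpair i
    exact ⟨p, hpV, q, hqV, by rwa [min_eq_left hle] at hpq⟩
  · refine hkey n hn U₂ r₂ V rv h₂ hV ?_ (fun i => (hmeet i).2) hdisj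
    intro i
    obtain ⟨p, hpV, q, hqV, hpq⟩ := hpair i
    exact ⟨p, hpV, q, hqV, by rwa [min_eq_right hle] at hpq⟩
end
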